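/- Let Δt > 0 and ξ, Π, A, B, Π′ ∈ ℝ³ satisfy one step of the rigid-body midpoint integrator: d⁺(Δt,ξ,A) = Π, d⁺(Δt,ξ,B) = d⁻(Δt,ξ,A), and Π′ = d⁻(Δt,ξ,B). Then the updated body momentum is the coadjoint update Π′ = cay(Δtξ̂)⁻¹ · cay(Δtξ̂)⁻¹ · Π. -/

import Mathlib

open Matrix

noncomputable section

/-- The hat map: the 3×3 skew-symmetric matrix `ξ̂` with `ξ̂ v = ξ × v`. -/
def hat (ξ : Fin 3 → ℝ) : Matrix (Fin 3) (Fin 3) ℝ :=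
  !![0, -ξ 2, ξ 1; ξ 2, 0, -ξ 0; -ξ 1, ξ 0, 0]

/-- The Cayley transform `cay(hξ̂) = (I − (h/2)ξ̂)⁻¹ (I + (h/2)ξ̂)`. -/
def cay (h : ℝ) (ξ : Fin 3 → ℝ) : Matrix (Fin 3) (Fin 3) ℝ :=
  (1 - (h / 2) • hat ξ)⁻¹ * (1 + (h / 2) • hat ξ)

/-- `d⁺(h,ξ,Π) = Π + (h/2) ξ×Π − (h²/4)(ξ·Π)ξ`. -/
def dplus (h : ℝ) (ξ Pv : Fin 3 → ℝ) : Fin 3 → ℝ :=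
  Pv + (h / 2) • (ξ ⨯₃ Pv) - (h ^ 2 / 4 * (ξ ⬝ᵥ Pv)) • ξ

/-- `d⁻(h,ξ,Π) = Π − (h/2) ξ×Π − (h²/4)(ξ·Π)ξ`. -/
def dminus (h : ℝ) (ξ Pv : Fin 3 → ℝ) : Fin 3 → ℝ :=
  Pv - (h / 2) • (ξ ⨯₃ Pv) - (h ^ 2 / 4 * (ξ ⬝ᵥ Pv)) • ξ

lemma hat_entries (ξ : Fin 3 → ℝ) (s : ℝ) :
    (1 : Matrix (Fin 3) (Fin 3) ℝ) - s • hat ξ =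
      !![1, s * ξ 2, -(s * ξ 1); -(s * ξ 2), 1, s * ξ 0; s * ξ 1, -(s * ξ 0), 1] := by
  ext i j
  fin_cases i <;> fin_cases j <;> simp [hat, Matrix.one_apply]

lemma hat_entries' (ξ : Fin 3 → ℝ) (s : ℝ) :
    (1 : Matrix (Fin 3) (Fin 3) ℝ) + s • hat ξ =
      !![1, -(s * ξ 2), s * ξ 1; s * ξ 2, 1, -(s * ξ 0); -(s * ξ 1), s * ξ 0, 1] := by
  ext i j
  fin_cases i <;> fin_cases j <;> simp [hat, Matrix.one_apply]

lemma detM (ξ : Fin 3 → ℝ) (s : ℝ) :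
    ((1 : Matrix (Fin 3) (Fin 3) ℝ) - s • hat ξ).det
      = 1 + s ^ 2 * (ξ 0 ^ 2 + ξ 1 ^ 2 + ξ 2 ^ 2) := by
  rw [hat_entries, Matrix.det_fin_three]
  simp
  ring

lemma detN (ξ : Fin 3 → ℝ) (s : ℝ) :
    ((1 : Matrix (Fin 3) (Fin 3) ℝ) + s • hat ξ).det
      = 1 + s ^ 2 * (ξ 0 ^ 2 + ξ 1 ^ 2 + ξ 2 ^ 2) := by
  rw [hat_entries', Matrix.det_fin_three]
  simp
  ring

lemma det_pos (ξ : Fin 3 → ℝ) (s : ℝ) :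
    (0 : ℝ) < 1 + s ^ 2 * (ξ 0 ^ 2 + ξ 1 ^ 2 + ξ 2 ^ 2) := by positivity

lemma unitM (ξ : Fin 3 → ℝ) (s : ℝ) :
    IsUnit ((1 : Matrix (Fin 3) (Fin 3) ℝ) - s • hat ξ).det := by
  rw [detM]; exact (isUnit_iff_ne_zero).mpr (ne_of_gt (det_pos ξ s))

lemma unitN (ξ : Fin 3 → ℝ) (s : ℝ) :
    IsUnit ((1 : Matrix (Fin 3) (Fin 3) ℝ) + s • hat ξ).det := by
  rw [detN]; exact (isUnit_iff_ne_zero).mpr (ne_of_gt (det_pos ξ s))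

lemma cay_inv (h : ℝ) (ξ : Fin 3 → ℝ) :
    (cay h ξ)⁻¹ = (1 + (h / 2) • hat ξ)⁻¹ * (1 - (h / 2) • hat ξ) := by
  rw [cay, Matrix.mul_inv_rev, Matrix.nonsing_inv_nonsing_inv _ (unitM ξ (h/2))]

lemma key (h : ℝ) (ξ A : Fin 3 → ℝ) :
    ((1 : Matrix (Fin 3) (Fin 3) ℝ) - (h / 2) • hat ξ).mulVec (dplus h ξ A)
      = ((1 : Matrix (Fin 3) (Fin 3) ℝ) + (h / 2) • hat ξ).mulVec (dminus h ξ A) := by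
  funext i
  fin_cases i <;>
    simp [hat, dplus, dminus, Matrix.mulVec, dotProduct, crossProduct,
      Fin.sum_univ_three, Matrix.one_apply, Matrix.sub_apply, Matrix.add_apply,
      Matrix.smul_apply, Matrix.vecHead, Matrix.vecTail] <;> ring

lemma step (h : ℝ) (ξ A : Fin 3 → ℝ) :
    dminus h ξ A = (cay h ξ)⁻¹.mulVec (dplus h ξ A) := by
  rw [cay_inv, ← Matrix.mulVec_mulVec, key, Matrix.mulVec_mulVec,
    Matrix.nonsing_inv_mul _ (unitN ξ (h/2)), Matrix.one_mulVec]

/-- One step of the rigid-body stochastic variational midpoint integrator is the coadjoint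
update `Π′ = cay(Δtξ̂)⁻¹ · cay(Δtξ̂)⁻¹ · Π`. -/
theorem midpoint_step_is_coadjoint_update
    (Δt : ℝ) (hΔt : 0 < Δt) (ξ Pv A B Pv' : Fin 3 → ℝ)
    (h1 : dplus Δt ξ A = Pv)
    (h2 : dplus Δt ξ B = dminus Δt ξ A)
    (h3 : Pv' = dminus Δt ξ B) :
    Pv' = (cay Δt ξ)⁻¹.mulVec ((cay Δt ξ)⁻¹.mulVec Pv) := by
  rw [h3, step, h2, step, h1]
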